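/- Let μ ≥ 3 be an odd integer and let ζ satisfy 0 < ζ < min{1/(μ+1), 4/(μ+1)²}. Set η = min{ζ, 1 − ζ(μ+1), (ζ/(1+ζ))·(1 − ζ(1+μ)²/4)}. Then for every z ∈ ℝ one has z^{2μ} − ζμ·z^{μ+1} + ζ·z^μ + ζ ≥ η·(z^{2μ} + 1). -/

import Mathlib

open Real Set

set_option maxHeartbeats 2000000 in
/-- The polynomial inequality `z^{2μ} - ζμz^{μ+1} + ζz^μ + ζ ≥ η(z^{2μ} + 1)` from Example 2. -/
theorem example2_polynomial_inequality
    (μ : ℕ) (hμodd : Odd μ) (hμ : 3 ≤ μ)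
    (ζ : ℝ) (hζ0 : 0 < ζ)
    (hζ1 : ζ < min (1 / ((μ:ℝ) + 1)) (4 / ((μ:ℝ) + 1) ^ 2))
    (η : ℝ)
    (hη : η = min ζ (min (1 - ζ * ((μ:ℝ) + 1))
      ((ζ / (1 + ζ)) * (1 - ζ * (1 + (μ:ℝ)) ^ 2 / 4)))) :
    ∀ z : ℝ, η * (z ^ (2 * μ) + 1) ≤
      z ^ (2 * μ) - ζ * (μ:ℝ) * z ^ (μ + 1) + ζ * z ^ μ + ζ := by
  intro z
  set m : ℝ := (μ:ℝ) with hm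
  have hm3 : (3:ℝ) ≤ m := by rw [hm]; exact_mod_cast hμ
  have hm1 : (0:ℝ) < m + 1 := by linarith
  have hζa : ζ < 1 / (m + 1) := lt_of_lt_of_le hζ1 (min_le_left _ _)
  have hζb : ζ < 4 / (m + 1) ^ 2 := lt_of_lt_of_le hζ1 (min_le_right _ _)
  have hζ1' : ζ * (m + 1) < 1 := (lt_div_iff₀ hm1).mp hζa
  have hζ2' : ζ * (m + 1) ^ 2 < 4 := (lt_div_iff₀ (by positivity)).mp hζb
  have hζsmall : ζ < 1 := by nlinarith
  have h1ζ : (0:ℝ) < 1 + ζ := by linarith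
  have hη1 : η ≤ ζ := by rw [hη]; exact min_le_left _ _
  have hη2 : η ≤ 1 - ζ * (m + 1) := by
    rw [hη]; exact le_trans (min_le_right _ _) (min_le_left _ _)
  have hη3 : η * (1 + ζ) ≤ ζ * (1 - ζ * (1 + m) ^ 2 / 4) := by
    have h := le_trans (le_of_eq hη) (le_trans (min_le_right _ _) (min_le_right _ _))
    calc η * (1 + ζ) ≤ (ζ / (1 + ζ)) * (1 - ζ * (1 + m) ^ 2 / 4) * (1 + ζ) := by
          exact mul_le_mul_of_nonneg_right h (le_of_lt h1ζ)
      _ = ζ * (1 - ζ * (1 + m) ^ 2 / 4) := by field_simp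
  have hηlt1 : η < 1 := lt_of_le_of_lt hη1 hζsmall
  have h4pos : (0:ℝ) < 4 * (1 - η) := by linarith
  -- key discriminant lemma
  have K : ζ ^ 2 * (1 + m) ^ 2 ≤ 4 * (1 - η) * (ζ - η) := by
    nlinarith [sq_nonneg (ζ * (4 - ζ * (1 + m) ^ 2)), hη3, hζ0, h1ζ,
      mul_nonneg (sub_nonneg.2 hη3) (sq_nonneg ζ),
      mul_nonneg (sub_nonneg.2 hη3) (le_of_lt h1ζ),
      mul_nonneg (sub_nonneg.2 hη3) (sub_nonneg.2 hη3),
      mul_nonneg (mul_nonneg (sub_nonneg.2 hη3) (le_of_lt hζ0)) (sq_nonneg (1+m))]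
  set x : ℝ := z ^ μ with hx
  set w : ℝ := z ^ (μ + 1) with hwdef
  have hs : z ^ (2 * μ) = x ^ 2 := by rw [hx, show 2 * μ = μ * 2 from by ring, pow_mul]
  have hwx : w = x * z := by rw [hwdef, hx, pow_succ]
  have hw0 : (0:ℝ) ≤ w := (hμodd.add_one).pow_nonneg z
  rw [hs]
  rcases le_or_gt (|z|) 1 with hz1 | hz1
  · -- |z| ≤ 1 : w ≤ |x|
    have hwabs : w ≤ |x| := by
      have : w = |x| * |z| := by rw [← abs_mul, ← hwx, abs_of_nonneg hw0]
      rw [this]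
      exact mul_le_of_le_one_right (abs_nonneg x) hz1
    rcases abs_cases x with ⟨hax, hx0⟩ | ⟨hax, hx0⟩
    · rw [hax] at hwabs
      have hmw : ζ * m * w ≤ ζ * m * x :=
        mul_le_mul_of_nonneg_left hwabs (by positivity)
      have hq : 0 ≤ 4 * (1 - η) * ((1 - η) * x ^ 2 - ζ * (m - 1) * x + (ζ - η)) := by
        nlinarith [sq_nonneg (2 * (1 - η) * x - ζ * (m - 1)), K,
          mul_nonneg (sq_nonneg ζ) (by linarith : (0:ℝ) ≤ m)]
      have hq2 : 0 ≤ (1 - η) * x ^ 2 - ζ * (m - 1) * x + (ζ - η) := by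
        by_contra h
        push_neg at h
        nlinarith [hq, h4pos]
      linarith [hmw, hq2]
    · rw [hax] at hwabs
      have hmw : ζ * m * w ≤ ζ * m * (-x) :=
        mul_le_mul_of_nonneg_left hwabs (by positivity)
      have hq : 0 ≤ 4 * (1 - η) * ((1 - η) * x ^ 2 + ζ * (m + 1) * x + (ζ - η)) := by
        nlinarith [sq_nonneg (2 * (1 - η) * x + ζ * (m + 1)), K]
      have hq2 : 0 ≤ (1 - η) * x ^ 2 + ζ * (m + 1) * x + (ζ - η) := by
        by_contra h
        push_neg at h
        nlinarith [hq, h4pos]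
      linarith [hmw, hq2]
  · -- |z| ≥ 1 : w ≤ x^2, 1 ≤ x^2, 0 ≤ x^2 + x
    have hz1' : (1:ℝ) ≤ |z| := le_of_lt hz1
    have hws : w ≤ x ^ 2 := by
      have h1 : w = |z| ^ (μ + 1) := by
        rw [← abs_of_nonneg hw0, hwdef, abs_pow]
      have h2 : x ^ 2 = |z| ^ (2 * μ) := by
        rw [← hs, ← abs_pow, abs_of_nonneg (by rw [hs]; positivity)]
      rw [h1, h2]
      exact pow_le_pow_right₀ hz1' (by omega)
    have hx2 : (1:ℝ) ≤ x ^ 2 := by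
      have h2 : x ^ 2 = |z| ^ (2 * μ) := by
        rw [← hs, ← abs_pow, abs_of_nonneg (by rw [hs]; positivity)]
      rw [h2]
      calc (1:ℝ) = 1 ^ (2 * μ) := (one_pow _).symm
        _ ≤ |z| ^ (2 * μ) := pow_le_pow_left₀ (by norm_num) hz1' _
    have hxx : (0:ℝ) ≤ x ^ 2 + x := by nlinarith [sq_nonneg (x + 1)]
    have hmw : ζ * m * w ≤ ζ * m * x ^ 2 :=
      mul_le_mul_of_nonneg_left hws (by positivity)
    have hA : 0 ≤ (1 - ζ * (m + 1) - η) * (x ^ 2 - 1) :=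
      mul_nonneg (by linarith) (by linarith)
    have hB : 0 ≤ ζ * (x ^ 2 + x) := mul_nonneg (le_of_lt hζ0) hxx
    nlinarith [hA, hB, hmw, hη1]
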